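/- Let p ≠ 2, 3 be a prime, ℛ = ℤ_p⟦X₁,X₂,X₃,X₄,Y₁,Y₂,Y₃,Y₄⟧, and let X = 1 + (Xᵢ) and Y = 1 + (Yᵢ) be the corresponding elements of Γ(ℛ) = ker(GL₂(ℛ) → GL₂(𝔽_p)). Fix an embedding σ : S₃ → GL₂(ℤ_p) lifting the standard representation S₃ → GL₂(𝔽_p), and let P ⊆ Γ(ℛ) be the closed subgroup topologically generated by all σ(S₃)-conjugates of X and Y. Then for every complete Noetherian local ring R with residue field 𝔽_p, the map φ ↦ (φ(X), φ(Y)) gives a bijection between continuous S₃-equivariant homomorphisms P → Γ(R) and pairs of elements of Γ(R); equivalently, precomposition with the map F → P (sending the two free generators to X and Y) is a bijection Hom_{S₃}(P, Γ(R)) → Hom_{pro-p}(F, Γ(R)), where F is the free pro-p group on two generators. -/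

import Mathlib

open Matrix IsLocalRing

noncomputable section EvalAux
open MvPowerSeries

variable {σ : Type} [Fintype σ] [Nonempty σ] [DecidableEq σ]
variable {A B : Type*} [CommRing A] [CommRing B] [Algebra A B]

/-- the constant finsupp -/
def cstF (σ : Type) [Fintype σ] (k : ℕ) : σ →₀ ℕ := Finsupp.equivFunOnFinite.symm fun _ => k

@[simp] lemma cstF_apply (k : ℕ) (i : σ) : cstF σ k i = k := rfl

lemma exists_ge_of_not_lt_cstF {d : σ →₀ ℕ} {k : ℕ} (h : ¬ d < cstF σ k) : ∃ i, k ≤ d i := by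
  by_contra hc
  push_neg at hc
  apply h
  constructor
  · intro i; exact le_of_lt (by simpa using hc i)
  · intro hle
    obtain ⟨i⟩ := ‹Nonempty σ›
    have := hle i
    simp only [cstF_apply] at this
    exact absurd (hc i) (by omega)

lemma lt_cstF_mono {d : σ →₀ ℕ} {k K : ℕ} (hkK : k ≤ K) (h : d < cstF σ k) : d < cstF σ K := by
  refine lt_of_lt_of_le h ?_
  intro i; simpa using hkK

variable (I : Ideal B) (a : σ → B)

lemma aeval_monomial_mem (ha : ∀ i, a i ∈ I) (d : σ →₀ ℕ) (k : ℕ) (i : σ)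
    (hk : k ≤ d i) (c : A) : MvPolynomial.aeval a (MvPolynomial.monomial d c) ∈ I ^ k := by
  classical
  rw [MvPolynomial.aeval_monomial]
  rcases Nat.eq_zero_or_pos k with rfl | hkpos
  · simp
  have hi : i ∈ d.support := by rw [Finsupp.mem_support_iff]; omega
  rw [← Finsupp.mul_prod_erase d i (fun i n => a i ^ n) hi]
  have h1 : a i ^ d i ∈ I ^ k :=
    Ideal.pow_le_pow_right hk (Ideal.pow_mem_pow (ha i) (d i))
  exact Ideal.mul_mem_left _ _ (Ideal.mul_mem_right _ _ h1)

lemma aeval_mem_of_support (ha : ∀ i, a i ∈ I) (Q : MvPolynomial σ A) (k : ℕ)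
    (hQ : ∀ d ∈ Q.support, ∃ i, k ≤ d i) : MvPolynomial.aeval a Q ∈ I ^ k := by
  classical
  rw [Q.as_sum, map_sum]
  refine Ideal.sum_mem _ fun d hd => ?_
  obtain ⟨i, hi⟩ := hQ d hd
  exact aeval_monomial_mem I a ha d k i hi _

/-- partial evaluation: evaluate the truncation of `F` at multidegree `(k,…,k)`. -/
def Spart (k : ℕ) (F : MvPowerSeries σ A) : B :=
  MvPolynomial.aeval a (trunc A (cstF σ k) F)

lemma Spart_add (k : ℕ) (F G : MvPowerSeries σ A) :
    Spart a k (F + G) = Spart a k F + Spart a k G := by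
  unfold Spart; rw [_root_.map_add, _root_.map_add]

lemma Spart_sub_mem (ha : ∀ i, a i ∈ I) {k K : ℕ} (hkK : k ≤ K) (F : MvPowerSeries σ A) :
    Spart a K F - Spart a k F ∈ I ^ k := by
  classical
  unfold Spart
  rw [← _root_.map_sub]
  refine aeval_mem_of_support I a ha _ k fun d hd => ?_
  refine exists_ge_of_not_lt_cstF fun hlt => ?_
  rw [MvPolynomial.mem_support_iff] at hd
  apply hd
  rw [MvPolynomial.coeff_sub, coeff_trunc, coeff_trunc, if_pos (lt_cstF_mono hkK hlt),
    if_pos hlt, sub_self]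

lemma Spart_mul_mem (ha : ∀ i, a i ∈ I) (k : ℕ) (F G : MvPowerSeries σ A) :
    Spart a k F * Spart a k G - Spart a k (F * G) ∈ I ^ k := by
  classical
  unfold Spart
  rw [← _root_.map_mul, ← _root_.map_sub]
  refine aeval_mem_of_support I a ha _ k fun d hd => ?_
  refine exists_ge_of_not_lt_cstF fun hlt => ?_
  rw [MvPolynomial.mem_support_iff] at hd
  apply hd
  rw [MvPolynomial.coeff_sub, MvPolynomial.coeff_mul, coeff_trunc, if_pos hlt,
    coeff_mul]
  rw [sub_eq_zero]
  refine Finset.sum_congr rfl fun x hx => ?_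
  replace hx : x.1 + x.2 = d := Finset.HasAntidiagonal.mem_antidiagonal.mp hx
  have hx1 : x.1 ≤ d := by
    intro i
    have := DFunLike.congr_fun hx i
    simp only [Finsupp.add_apply] at this
    omega
  have hx2 : x.2 ≤ d := by
    intro i
    have := DFunLike.congr_fun hx i
    simp only [Finsupp.add_apply] at this
    omega
  rw [coeff_trunc, coeff_trunc, if_pos (lt_of_le_of_lt hx1 hlt),
    if_pos (lt_of_le_of_lt hx2 hlt)]

end EvalAux

noncomputable section EvalLim

variable {σ : Type} [Fintype σ] [Nonempty σ] [DecidableEq σ]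
variable {A B : Type*} [CommRing A] [CommRing B] [Algebra A B]
variable {I : Ideal B} {a : σ → B} [IsAdicComplete I B]

lemma mem_smul_top_iff' (n : ℕ) (x : B) :
    x ∈ (I ^ n • (⊤ : Submodule B B)) ↔ x ∈ I ^ n := by
  rw [smul_eq_mul, Ideal.mul_top]

lemma cstF_succ_ne_zero (k : ℕ) : cstF σ (k + 1) ≠ 0 := by
  obtain ⟨i⟩ := ‹Nonempty σ›
  intro h
  have := DFunLike.congr_fun h i
  simp at this

lemma Spart_cauchy (ha : ∀ i, a i ∈ I) (F : MvPowerSeries σ A) :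
    ∀ {m n : ℕ}, m ≤ n →
      Spart a m F ≡ Spart a n F [SMOD (I ^ m • ⊤ : Submodule B B)] := by
  intro m n h
  rw [SModEq.sub_mem, mem_smul_top_iff']
  simpa [neg_sub] using neg_mem (Spart_sub_mem I a ha h F)

/-- Evaluation of a multivariate power series at a tuple of elements of `I`,
in an `I`-adically complete ring. -/
def evalFun (ha : ∀ i, a i ∈ I) (F : MvPowerSeries σ A) : B :=
  (IsPrecomplete.prec (IsAdicComplete.toIsPrecomplete (I := I))
    (fun {m n} h => Spart_cauchy ha F h)).choose

lemma evalFun_spec (ha : ∀ i, a i ∈ I) (F : MvPowerSeries σ A) (k : ℕ) :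
    evalFun ha F - Spart a k F ∈ I ^ k := by
  have := (IsPrecomplete.prec (IsAdicComplete.toIsPrecomplete (I := I))
    (fun {m n} h => Spart_cauchy ha F h)).choose_spec k
  rw [SModEq.sub_mem, mem_smul_top_iff'] at this
  simpa [evalFun, neg_sub] using neg_mem this

lemma evalFun_unique (ha : ∀ i, a i ∈ I) (F : MvPowerSeries σ A) (L : B)
    (h : ∀ k, L - Spart a k F ∈ I ^ k) : evalFun ha F = L := by
  have key : ∀ n : ℕ, evalFun ha F - L ≡ 0 [SMOD (I ^ n • ⊤ : Submodule B B)] := by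
    intro n
    rw [SModEq.zero, mem_smul_top_iff']
    have h1 := evalFun_spec ha F n
    have h2 := h n
    simpa using sub_mem h1 h2
  have := IsHausdorff.haus (IsAdicComplete.toIsHausdorff (I := I)) _ key
  exact sub_eq_zero.mp this

/-- Evaluation as a ring homomorphism. -/
def evalRingHom (ha : ∀ i, a i ∈ I) : MvPowerSeries σ A →+* B where
  toFun := evalFun ha
  map_one' := evalFun_unique ha 1 1 (fun k => by
    rcases k with _ | k
    · simp
    · unfold Spart
      rw [MvPowerSeries.trunc_one _ (cstF_succ_ne_zero (σ := σ) k), _root_.map_one, sub_self]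
      exact zero_mem _)
  map_mul' := fun F G => evalFun_unique ha _ _ fun k => by
    have h1 := evalFun_spec ha F k
    have h2 := evalFun_spec ha G k
    have h3 := Spart_mul_mem I a ha k F G
    have key : evalFun ha F * evalFun ha G - Spart a k (F * G) =
        evalFun ha F * (evalFun ha G - Spart a k G)
        + (evalFun ha F - Spart a k F) * Spart a k G
        + (Spart a k F * Spart a k G - Spart a k (F * G)) := by ring
    rw [key]
    exact add_mem (add_mem (Ideal.mul_mem_left _ _ h2) (Ideal.mul_mem_right _ _ h1)) h3
  map_zero' := evalFun_unique ha 0 0 (fun k => by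
    unfold Spart
    rw [_root_.map_zero, _root_.map_zero, sub_self]
    exact zero_mem _)
  map_add' := fun F G => evalFun_unique ha _ _ fun k => by
    have h1 := evalFun_spec ha F k
    have h2 := evalFun_spec ha G k
    rw [Spart_add]
    have key : evalFun ha F + evalFun ha G - (Spart a k F + Spart a k G) =
        (evalFun ha F - Spart a k F) + (evalFun ha G - Spart a k G) := by ring
    rw [key]
    exact add_mem h1 h2

lemma evalRingHom_C (ha : ∀ i, a i ∈ I) (c : A) :
    evalRingHom ha (MvPowerSeries.C (σ := σ) (R := A) c) = algebraMap A B c :=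
  evalFun_unique ha _ _ fun k => by
    rcases k with _ | k
    · simp
    · unfold Spart
      rw [MvPowerSeries.trunc_C _ (cstF_succ_ne_zero (σ := σ) k), MvPolynomial.aeval_C, sub_self]
      exact zero_mem _


lemma evalFun_unique₂ (ha : ∀ i, a i ∈ I) (F : MvPowerSeries σ A) (L : B)
    (h : ∀ k, L - Spart a (k + 2) F ∈ I ^ (k + 2)) : evalFun ha F = L := by
  have key : ∀ n : ℕ, evalFun ha F - L ≡ 0 [SMOD (I ^ n • ⊤ : Submodule B B)] := by
    intro n
    rw [SModEq.zero, mem_smul_top_iff']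
    have h1 := evalFun_spec ha F (n + 2)
    have h2 := h n
    have hle : I ^ (n + 2) ≤ I ^ n := Ideal.pow_le_pow_right (by omega)
    simpa using sub_mem (hle h1) (hle h2)
  have := IsHausdorff.haus (IsAdicComplete.toIsHausdorff (I := I)) _ key
  exact sub_eq_zero.mp this

lemma single_lt_cstF (i : σ) (k : ℕ) : Finsupp.single i 1 < cstF σ (k + 2) := by
  rw [lt_iff_le_and_ne]
  constructor
  · intro j
    rcases eq_or_ne j i with rfl | hji
    · simp only [cstF_apply, Finsupp.single_eq_same]
      omega
    · rw [Finsupp.single_eq_of_ne' (Ne.symm hji)]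
      simp
  · intro h
    have := DFunLike.congr_fun h i
    simp [Finsupp.single_apply] at this

lemma evalRingHom_X (ha : ∀ i, a i ∈ I) (i : σ) :
    evalRingHom ha (MvPowerSeries.X i : MvPowerSeries σ A) = a i := by
  refine evalFun_unique₂ (A := A) ha (MvPowerSeries.X i) (a i) fun k => ?_
  · classical
    have htr : MvPowerSeries.trunc A (cstF σ (k + 2)) (MvPowerSeries.X i)
        = MvPolynomial.X i := by
      apply MvPolynomial.ext
      intro d
      rw [MvPowerSeries.coeff_trunc, MvPowerSeries.coeff_X, MvPolynomial.coeff_X']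
      by_cases hd : d = Finsupp.single i 1
      · subst hd
        rw [if_pos (single_lt_cstF i k), if_pos rfl]
      · by_cases hlt : d < cstF σ (k + 2)
        · rw [if_pos hlt, if_neg hd, if_neg fun h => hd h.symm]
        · rw [if_neg hlt, if_neg fun h => hd h.symm]
    unfold Spart
    rw [htr, MvPolynomial.aeval_X, sub_self]
    exact zero_mem _

lemma evalRingHom_mem_of_constantCoeff_zero (ha : ∀ i, a i ∈ I) (F : MvPowerSeries σ A)
    (h0 : MvPowerSeries.constantCoeff (σ := σ) (R := A) F = 0) : evalRingHom ha F ∈ I := by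
  classical
  have h1 := evalFun_spec ha F 1
  rw [pow_one] at h1
  have h2 : Spart a 1 F ∈ I := by
    have := aeval_mem_of_support I a ha (MvPowerSeries.trunc A (cstF σ 1) F) 1 ?_
    · simpa [Spart] using this
    · intro d hd
      rw [MvPolynomial.mem_support_iff, MvPowerSeries.coeff_trunc] at hd
      have hdne : d ≠ 0 := by
        intro h
        subst h
        split_ifs at hd <;> simp_all [MvPowerSeries.coeff_zero_eq_constantCoeff]
      obtain ⟨j, hj⟩ := Finsupp.ne_iff.mp hdne
      exact ⟨j, by simpa using Nat.one_le_iff_ne_zero.mpr (by simpa using hj)⟩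
  have : (evalRingHom ha F : B) = (evalFun ha F - Spart a 1 F) + Spart a 1 F := by
    show evalFun ha F = _
    ring
  rw [this]
  exact add_mem h1 h2

end EvalLim

noncomputable section TopAux

lemma mem_smul_top_iff2 {R : Type*} [CommRing R] (I : Ideal R) (n : ℕ) (x : R) :
    x ∈ (I ^ n • (⊤ : Submodule R R)) ↔ x ∈ I ^ n := by
  rw [smul_eq_mul, Ideal.mul_top]

lemma t2Space_of_isAdic {R : Type*} [CommRing R] [TopologicalSpace R] [IsTopologicalRing R]
    (I : Ideal R) (hadic : IsAdic I) (hh : IsHausdorff I R) : T2Space R := by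
  constructor
  intro x y hxy
  have hne : ∃ n, x - y ∉ I ^ n := by
    by_contra hc
    push_neg at hc
    exact hxy (sub_eq_zero.mp (hh.haus (x - y) fun n => by
      rw [SModEq.zero, mem_smul_top_iff2]; exact hc n))
  obtain ⟨n, hn⟩ := hne
  refine ⟨(· - x) ⁻¹' (I ^ n : Ideal R), (· - y) ⁻¹' (I ^ n : Ideal R),
    ((isAdic_iff.mp hadic).1 n).preimage (continuous_id.sub continuous_const),
    ((isAdic_iff.mp hadic).1 n).preimage (continuous_id.sub continuous_const),
    by simp, by simp, ?_⟩
  rw [Set.disjoint_left]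
  intro z hz1 hz2
  apply hn
  have h1 : z - x ∈ I ^ n := hz1
  have h2 : z - y ∈ I ^ n := hz2
  have h := sub_mem h2 h1
  rwa [show (z - y) - (z - x) = x - y by ring] at h

lemma continuous_of_adics {R₁ R₂ : Type*} [CommRing R₁] [TopologicalSpace R₁]
    [IsTopologicalRing R₁] [CommRing R₂] [TopologicalSpace R₂] [IsTopologicalRing R₂]
    {I₁ : Ideal R₁} {I₂ : Ideal R₂} (h1 : IsAdic I₁) (h2 : IsAdic I₂)
    (f : R₁ →+* R₂) (hmap : ∀ n, ∀ x ∈ I₁ ^ n, f x ∈ I₂ ^ n) : Continuous f := by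
  apply continuous_of_continuousAt_zero f
  rw [ContinuousAt, _root_.map_zero]
  intro s hs
  obtain ⟨n, hn⟩ := (isAdic_iff.mp h2).2 s hs
  rw [Filter.mem_map]
  exact Filter.mem_of_superset (((isAdic_iff.mp h1).1 n).mem_nhds (SetLike.mem_coe.mpr (zero_mem _)))
    fun x hx => hn (hmap n x hx)

end TopAux


noncomputable section

/-- `ℛ = ℤ_p⟦X₁,…,X₄,Y₁,…,Y₄⟧`, the power series ring in 8 variables over the `p`-adic
integers. -/
abbrev Rcal (p : ℕ) [Fact p.Prime] := MvPowerSeries (Fin 8) ℤ_[p]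

/-- The lift of `σ` to `GL₂` of the power series ring `ℛ`, via constant power series. -/
def sigmaRcal (p : ℕ) [Fact p.Prime] (σZ : Equiv.Perm (Fin 3) →* GL (Fin 2) ℤ_[p]) :
    Equiv.Perm (Fin 3) →* GL (Fin 2) (Rcal p) :=
  (Matrix.GeneralLinearGroup.map (MvPowerSeries.C (σ := Fin 8) (R := ℤ_[p]))).comp σZ

/-- The compatible lift of `σ` to `GL₂(R)` for a `ℤ_p`-algebra `R`. -/
def sigmaR (p : ℕ) [Fact p.Prime] (R : Type) [CommRing R] [Algebra ℤ_[p] R]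
    (σZ : Equiv.Perm (Fin 3) →* GL (Fin 2) ℤ_[p]) : Equiv.Perm (Fin 3) →* GL (Fin 2) R :=
  (Matrix.GeneralLinearGroup.map (algebraMap ℤ_[p] R)).comp σZ

/-- Let `p ≠ 2, 3` be a prime, `ℛ = ℤ_p⟦X₁,…,X₄,Y₁,…,Y₄⟧`, and let
`X = 1 + (Xᵢ)`, `Y = 1 + (Yᵢ)` in `Γ(ℛ)`. Fix an embedding `σ : S₃ → GL₂(ℤ_p)` lifting the
standard representation `S₃ → GL₂(𝔽_p)`, and let `P ⊆ Γ(ℛ)` be the closed subgroup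
topologically generated by the `σ(S₃)`-conjugates of `X` and `Y`. Then for every complete
Noetherian local ring `R` with residue field `𝔽_p`, the map `φ ↦ (φ(X), φ(Y))` is a bijection
between continuous `S₃`-equivariant homomorphisms `P → Γ(R)` and pairs of elements of
`Γ(R)`. -/
theorem stmt_14 (p : ℕ) [Fact p.Prime] (hp2 : p ≠ 2) (hp3 : p ≠ 3)
    [TopologicalSpace (Rcal p)] [IsTopologicalRing (Rcal p)]
    (hadic : IsAdic (maximalIdeal (Rcal p)))
    -- an embedding `σ` of `S₃` into `GL₂(ℤ_p)` lifting the standard residual representation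
    (σZ : Equiv.Perm (Fin 3) →* GL (Fin 2) ℤ_[p]) (hσinj : Function.Injective σZ)
    (ρstd : Equiv.Perm (Fin 3) →* GL (Fin 2) (ZMod p)) (hstdinj : Function.Injective ρstd)
    (hσlift : (Matrix.GeneralLinearGroup.map (PadicInt.toZMod (p := p))).comp σZ = ρstd)
    -- the elements `X = 1 + (Xᵢ)` and `Y = 1 + (Yᵢ)` of `Γ(ℛ)`
    (Xu Yu : GL (Fin 2) (Rcal p))
    (hXu : (Xu : Matrix (Fin 2) (Fin 2) (Rcal p)) =
      1 + Matrix.of ![![MvPowerSeries.X 0, MvPowerSeries.X 1],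
        ![MvPowerSeries.X 2, MvPowerSeries.X 3]])
    (hYu : (Yu : Matrix (Fin 2) (Fin 2) (Rcal p)) =
      1 + Matrix.of ![![MvPowerSeries.X 4, MvPowerSeries.X 5],
        ![MvPowerSeries.X 6, MvPowerSeries.X 7]])
    -- `P`: the closed subgroup topologically generated by the `S₃`-conjugates of `X` and `Y`
    (P : Subgroup (GL (Fin 2) (Rcal p)))
    (hP : P = (Subgroup.closure
      {g | ∃ a : Equiv.Perm (Fin 3),
        g = sigmaRcal p σZ a * Xu * (sigmaRcal p σZ a)⁻¹ ∨
        g = sigmaRcal p σZ a * Yu * (sigmaRcal p σZ a)⁻¹}).topologicalClosure)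
    (hXP : Xu ∈ P) (hYP : Yu ∈ P)
    -- a complete Noetherian local ring `R` with residue field `𝔽_p`
    (R : Type) [CommRing R] [IsLocalRing R] [IsNoetherianRing R]
    [TopologicalSpace R] [IsTopologicalRing R] (hRadic : IsAdic (maximalIdeal R))
    [IsAdicComplete (maximalIdeal R) R] [Algebra ℤ_[p] R]
    (πR : R →+* ZMod p) (hπR : RingHom.ker πR = maximalIdeal R)
    (hcompat : πR.comp (algebraMap ℤ_[p] R) = PadicInt.toZMod) :
    Function.Bijective
      (fun φ : {f : ↥P →* ↥(Matrix.GeneralLinearGroup.map (n := Fin 2) πR).ker //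
          Continuous f ∧
            ∀ (a : Equiv.Perm (Fin 3)) (x y : ↥P),
              (y : GL (Fin 2) (Rcal p)) =
                  sigmaRcal p σZ a * x * (sigmaRcal p σZ a)⁻¹ →
                (f y : GL (Fin 2) R) =
                  sigmaR p R σZ a * (f x) * (sigmaR p R σZ a)⁻¹} =>
        (φ.1 ⟨Xu, hXP⟩, φ.1 ⟨Yu, hYP⟩)) := by
  classical
  haveI : IsHausdorff (maximalIdeal R) R := IsAdicComplete.toIsHausdorff
  haveI hT2R : T2Space R := t2Space_of_isAdic _ hRadic inferInstance
  -- membership in Γ(R) in terms of entries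
  have hmemker : ∀ g : GL (Fin 2) R,
      g ∈ (Matrix.GeneralLinearGroup.map (n := Fin 2) πR).ker ↔
        ∀ i j, ((g : Matrix (Fin 2) (Fin 2) R) i j) - ((1 : Matrix (Fin 2) (Fin 2) R) i j)
          ∈ maximalIdeal R := by
    intro g
    rw [MonoidHom.mem_ker]
    constructor
    · intro h i j
      have hval : ((g : Matrix (Fin 2) (Fin 2) R)).map πR = 1 := congrArg Units.val h
      have h2 := congrFun (congrFun hval i) j
      rw [Matrix.map_apply] at h2
      rw [← hπR, RingHom.mem_ker, _root_.map_sub, h2, Matrix.one_apply, Matrix.one_apply,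
        apply_ite πR, _root_.map_one, _root_.map_zero]
      split_ifs <;> ring
    · intro h
      apply Units.ext
      show ((g : Matrix (Fin 2) (Fin 2) R)).map πR = 1
      ext i j
      have h2 := h i j
      rw [← hπR, RingHom.mem_ker, _root_.map_sub, sub_eq_zero] at h2
      rw [Matrix.map_apply, h2, Matrix.one_apply, Matrix.one_apply, apply_ite πR,
        _root_.map_one, _root_.map_zero]
  -- Γ(R) is a closed subset of GL₂(R)
  have hGammaClosed :
      IsClosed (((Matrix.GeneralLinearGroup.map (n := Fin 2) πR).ker : Subgroup _) :
        Set (GL (Fin 2) R)) := by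
    have hmopen : IsOpen ((maximalIdeal R : Ideal R) : Set R) := by
      have := (isAdic_iff.mp hRadic).1 1
      rwa [pow_one] at this
    have hmclosed : IsClosed ((maximalIdeal R : Ideal R) : Set R) :=
      (maximalIdeal R).toAddSubgroup.isClosed_of_isOpen hmopen
    have hset : (((Matrix.GeneralLinearGroup.map (n := Fin 2) πR).ker : Subgroup _) :
        Set (GL (Fin 2) R)) =
        ⋂ i, ⋂ j, (fun g : GL (Fin 2) R =>
          ((g : Matrix (Fin 2) (Fin 2) R) i j) - ((1 : Matrix (Fin 2) (Fin 2) R) i j)) ⁻¹'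
            ((maximalIdeal R : Ideal R) : Set R) := by
      ext g
      simp only [Set.mem_iInter, Set.mem_preimage, SetLike.mem_coe]
      exact hmemker g
    rw [hset]
    have hval : Continuous fun g : GL (Fin 2) R => (g : Matrix (Fin 2) (Fin 2) R) :=
      Units.continuous_val
    refine isClosed_iInter fun i => isClosed_iInter fun j => hmclosed.preimage ?_
    exact (hval.matrix_elem i j).sub continuous_const
  have hPclosed : IsClosed (P : Set (GL (Fin 2) (Rcal p))) := by
    rw [hP]; exact Subgroup.isClosed_topologicalClosure _
  constructor
  · -- injectivity
    intro F1 F2 hval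
    have hX12 : F1.1 ⟨Xu, hXP⟩ = F2.1 ⟨Xu, hXP⟩ := congrArg Prod.fst hval
    have hY12 : F1.1 ⟨Yu, hYP⟩ = F2.1 ⟨Yu, hYP⟩ := congrArg Prod.snd hval
    apply Subtype.ext
    apply MonoidHom.ext
    intro x
    have hEclosed : IsClosed ((F1.1.eqLocus F2.1 : Subgroup ↥P) : Set ↥P) :=
      isClosed_eq F1.2.1 F2.2.1
    have hMclosed : IsClosed ((Subgroup.map P.subtype (F1.1.eqLocus F2.1) : Subgroup _) :
        Set (GL (Fin 2) (Rcal p))) := by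
      rw [Subgroup.coe_map]
      exact hPclosed.isClosedEmbedding_subtypeVal.isClosedMap _ hEclosed
    have hPM : P ≤ Subgroup.map P.subtype (F1.1.eqLocus F2.1) := by
      conv_lhs => rw [hP]
      apply Subgroup.topologicalClosure_minimal
      · rw [Subgroup.closure_le]
        rintro g ⟨s, hg | hg⟩
        · have hgP : g ∈ P := by
            rw [hP]
            exact Subgroup.le_topologicalClosure _ (Subgroup.subset_closure ⟨s, Or.inl hg⟩)
          refine ⟨⟨g, hgP⟩, ?_, rfl⟩
          have h1 := F1.2.2 s ⟨Xu, hXP⟩ ⟨g, hgP⟩ hg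
          have h2 := F2.2.2 s ⟨Xu, hXP⟩ ⟨g, hgP⟩ hg
          show F1.1 ⟨g, hgP⟩ = F2.1 ⟨g, hgP⟩
          apply Subtype.ext
          rw [h1, h2, hX12]
        · have hgP : g ∈ P := by
            rw [hP]
            exact Subgroup.le_topologicalClosure _ (Subgroup.subset_closure ⟨s, Or.inr hg⟩)
          refine ⟨⟨g, hgP⟩, ?_, rfl⟩
          have h1 := F1.2.2 s ⟨Yu, hYP⟩ ⟨g, hgP⟩ hg
          have h2 := F2.2.2 s ⟨Yu, hYP⟩ ⟨g, hgP⟩ hg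
          show F1.1 ⟨g, hgP⟩ = F2.1 ⟨g, hgP⟩
          apply Subtype.ext
          rw [h1, h2, hY12]
      · exact hMclosed
    obtain ⟨y, hyE, hy⟩ := hPM x.2
    have hyx : y = x := Subtype.ext hy
    exact hyx ▸ hyE
  · -- surjectivity
    rintro ⟨Au, Bu⟩
    have hAu := (hmemker _).mp Au.2
    have hBu := (hmemker _).mp Bu.2
    set a : Fin 8 → R :=
      ![((Au : GL (Fin 2) R) : Matrix (Fin 2) (Fin 2) R) 0 0 - 1,
        ((Au : GL (Fin 2) R) : Matrix (Fin 2) (Fin 2) R) 0 1,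
        ((Au : GL (Fin 2) R) : Matrix (Fin 2) (Fin 2) R) 1 0,
        ((Au : GL (Fin 2) R) : Matrix (Fin 2) (Fin 2) R) 1 1 - 1,
        ((Bu : GL (Fin 2) R) : Matrix (Fin 2) (Fin 2) R) 0 0 - 1,
        ((Bu : GL (Fin 2) R) : Matrix (Fin 2) (Fin 2) R) 0 1,
        ((Bu : GL (Fin 2) R) : Matrix (Fin 2) (Fin 2) R) 1 0,
        ((Bu : GL (Fin 2) R) : Matrix (Fin 2) (Fin 2) R) 1 1 - 1] with ha_def
    have ha : ∀ i, a i ∈ maximalIdeal R := by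
      intro i
      fin_cases i
      · simpa [ha_def] using hAu 0 0
      · simpa [ha_def] using hAu 0 1
      · simpa [ha_def] using hAu 1 0
      · simpa [ha_def] using hAu 1 1
      · simpa [ha_def] using hBu 0 0
      · simpa [ha_def] using hBu 0 1
      · simpa [ha_def] using hBu 1 0
      · simpa [ha_def] using hBu 1 1
    have ha0 : a 0 = ((Au : GL (Fin 2) R) : Matrix (Fin 2) (Fin 2) R) 0 0 - 1 := rfl
    have ha1 : a 1 = ((Au : GL (Fin 2) R) : Matrix (Fin 2) (Fin 2) R) 0 1 := rfl
    have ha2 : a 2 = ((Au : GL (Fin 2) R) : Matrix (Fin 2) (Fin 2) R) 1 0 := rfl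
    have ha3 : a 3 = ((Au : GL (Fin 2) R) : Matrix (Fin 2) (Fin 2) R) 1 1 - 1 := rfl
    have ha4 : a 4 = ((Bu : GL (Fin 2) R) : Matrix (Fin 2) (Fin 2) R) 0 0 - 1 := rfl
    have ha5 : a 5 = ((Bu : GL (Fin 2) R) : Matrix (Fin 2) (Fin 2) R) 0 1 := rfl
    have ha6 : a 6 = ((Bu : GL (Fin 2) R) : Matrix (Fin 2) (Fin 2) R) 1 0 := rfl
    have ha7 : a 7 = ((Bu : GL (Fin 2) R) : Matrix (Fin 2) (Fin 2) R) 1 1 - 1 := rfl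
    set f : MvPowerSeries (Fin 8) ℤ_[p] →+* R := evalRingHom (A := ℤ_[p]) ha with hf_def
    have hpR : algebraMap ℤ_[p] R (p : ℤ_[p]) ∈ maximalIdeal R := by
      rw [← hπR, RingHom.mem_ker, ← RingHom.comp_apply, hcompat]
      simp
    have hfmax : ∀ F ∈ maximalIdeal (Rcal p), f F ∈ maximalIdeal R := by
      intro F hF
      have hc0 : MvPowerSeries.constantCoeff (σ := Fin 8) (R := ℤ_[p]) F ∈ maximalIdeal ℤ_[p] := by
        rw [IsLocalRing.mem_maximalIdeal, mem_nonunits_iff] at hF ⊢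
        exact fun h => hF (MvPowerSeries.isUnit_iff_constantCoeff.mpr h)
      rw [PadicInt.maximalIdeal_eq_span_p, Ideal.mem_span_singleton] at hc0
      obtain ⟨d, hd⟩ := hc0
      have hsplit : F = (F - MvPowerSeries.C (σ := Fin 8) (R := ℤ_[p])
          (MvPowerSeries.constantCoeff (σ := Fin 8) (R := ℤ_[p]) F))
          + MvPowerSeries.C (σ := Fin 8) (R := ℤ_[p]) (MvPowerSeries.constantCoeff (σ := Fin 8) (R := ℤ_[p]) F) := by
        ring
      rw [hsplit, _root_.map_add]
      refine add_mem (evalRingHom_mem_of_constantCoeff_zero ha _ ?_) ?_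
      · simp
      · rw [evalRingHom_C, hd, _root_.map_mul]
        exact Ideal.mul_mem_right _ _ hpR
    have hfpow : ∀ n, ∀ x ∈ (maximalIdeal (Rcal p)) ^ n, f x ∈ (maximalIdeal R) ^ n := by
      intro n x hx
      have h1 : Ideal.map f (maximalIdeal (Rcal p)) ≤ maximalIdeal R :=
        Ideal.map_le_iff_le_comap.mpr fun y hy => hfmax y hy
      have h2 := Ideal.mem_map_of_mem f hx
      rw [Ideal.map_pow] at h2
      exact Ideal.pow_right_mono h1 n h2
    have hfc : Continuous f := continuous_of_adics hadic hRadic f hfpow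
    have hΦc : Continuous (Matrix.GeneralLinearGroup.map (n := Fin 2) f) := by
      rw [Units.continuous_iff]
      constructor
      · show Continuous fun g : GL (Fin 2) (Rcal p) =>
          ((g : Matrix (Fin 2) (Fin 2) (Rcal p))).map f
        exact Units.continuous_val.matrix_map hfc
      · show Continuous fun g : GL (Fin 2) (Rcal p) =>
          (((g⁻¹ : GL (Fin 2) (Rcal p)) : Matrix (Fin 2) (Fin 2) (Rcal p))).map f
        exact Units.continuous_coe_inv.matrix_map hfc
    have hΦX : Matrix.GeneralLinearGroup.map (n := Fin 2) f Xu = (Au : GL (Fin 2) R) := by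
      apply Units.ext
      show ((Xu : Matrix (Fin 2) (Fin 2) (Rcal p))).map f = ((Au : GL (Fin 2) R) : Matrix _ _ R)
      rw [hXu]
      ext i j
      fin_cases i <;> fin_cases j <;>
        simp [hf_def, Matrix.map_apply, Matrix.add_apply, Matrix.one_apply,
          evalRingHom_X, _root_.map_add, _root_.map_one, _root_.map_zero,
          ha0, ha1, ha2, ha3, ha4, ha5, ha6, ha7] <;> try ring
    have hΦY : Matrix.GeneralLinearGroup.map (n := Fin 2) f Yu = (Bu : GL (Fin 2) R) := by
      apply Units.ext
      show ((Yu : Matrix (Fin 2) (Fin 2) (Rcal p))).map f = ((Bu : GL (Fin 2) R) : Matrix _ _ R)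
      rw [hYu]
      ext i j
      fin_cases i <;> fin_cases j <;>
        simp [hf_def, Matrix.map_apply, Matrix.add_apply, Matrix.one_apply,
          evalRingHom_X, _root_.map_add, _root_.map_one, _root_.map_zero,
          ha0, ha1, ha2, ha3, ha4, ha5, ha6, ha7] <;> try ring
    have hΦσ : ∀ s, Matrix.GeneralLinearGroup.map (n := Fin 2) f (sigmaRcal p σZ s)
        = sigmaR p R σZ s := by
      intro s
      have hcomp : f.comp (MvPowerSeries.C (σ := Fin 8) (R := ℤ_[p])) = algebraMap ℤ_[p] R :=
        RingHom.ext fun c => evalRingHom_C ha c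
      show Matrix.GeneralLinearGroup.map f
        (Matrix.GeneralLinearGroup.map (MvPowerSeries.C (σ := Fin 8) (R := ℤ_[p])) (σZ s)) = _
      rw [← Matrix.GeneralLinearGroup.map_comp_apply, ← Matrix.GeneralLinearGroup.map_comp,
        hcomp]
      rfl
    have hPker : ∀ g ∈ P, Matrix.GeneralLinearGroup.map (n := Fin 2) f g ∈
        (Matrix.GeneralLinearGroup.map (n := Fin 2) πR).ker := by
      have hle : P ≤ ((Matrix.GeneralLinearGroup.map (n := Fin 2) πR).ker).comap
          (Matrix.GeneralLinearGroup.map (n := Fin 2) f) := by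
        rw [hP]
        apply Subgroup.topologicalClosure_minimal
        · rw [Subgroup.closure_le]
          rintro g ⟨s, hg | hg⟩
          · refine SetLike.mem_coe.mpr (Subgroup.mem_comap.mpr ?_)
            rw [hg, _root_.map_mul, _root_.map_mul, _root_.map_inv, hΦσ, hΦX]
            exact (MonoidHom.normal_ker _).conj_mem _ Au.2 _
          · refine SetLike.mem_coe.mpr (Subgroup.mem_comap.mpr ?_)
            rw [hg, _root_.map_mul, _root_.map_mul, _root_.map_inv, hΦσ, hΦY]
            exact (MonoidHom.normal_ker _).conj_mem _ Bu.2 _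
        · exact hGammaClosed.preimage hΦc
      exact fun g hg => hle hg
    refine ⟨⟨MonoidHom.codRestrict
      ((Matrix.GeneralLinearGroup.map (n := Fin 2) f).comp P.subtype) _
      (fun x => hPker x.1 x.2), ?_, ?_⟩, ?_⟩
    · exact Continuous.subtype_mk (hΦc.comp continuous_subtype_val) _
    · intro s x y hy
      show Matrix.GeneralLinearGroup.map (n := Fin 2) f (y : GL (Fin 2) (Rcal p)) = _
      rw [hy, _root_.map_mul, _root_.map_mul, _root_.map_inv, hΦσ]
      rfl
    · simp only [Prod.mk.injEq]
      constructor
      · apply Subtype.ext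
        exact hΦX
      · apply Subtype.ext
        exact hΦY

end
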